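/- arXiv:2408.02510 — 4 statements merged into one kernel-verified Lean document; each statement's English description precedes it below -/
import Mathlib

section
/- Let A be a C*-algebra and H a group acting on A by *-algebra automorphisms β_h. Then the following are equivalent: (i) for every pair of nonzero H-invariant hereditary closed *-subalgebras B₁, B₂ of A there exist b₁ ∈ B₁ and b₂ ∈ B₂ with b₁ b₂ ≠ 0; (ii) for every pair of nonzero elements x, y ∈ A there exists h ∈ H such that x β_h(y) ≠ 0. -/
open scoped NNReal ContinuousMapZero
open Filter Topology Unitization

section Aux

variable {A : Type*} [NonUnitalCStarAlgebra A] [PartialOrder A] [StarOrderedRing A]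

lemma aux_cfcnHom_mem (L : Submodule ℂ A) (hLc : IsClosed (L : Set A))
    (hmulL : ∀ a z : A, z ∈ L → a * z ∈ L) {b : A} (hb : IsSelfAdjoint b) (hbL : b ∈ L)
    (f : C(quasispectrum ℝ b, ℝ)₀) : cfcₙHom hb f ∈ L := by
  have h0 : ((0 : quasispectrum ℝ b) : ℝ) = 0 := rfl
  induction f using ContinuousMapZero.induction_on_of_compact with
  | zero => simp
  | id =>
      have hid : cfcₙHom (R := ℝ) hb (ContinuousMapZero.id (quasispectrum ℝ b)) = b := cfcₙHom_id hb
      exact hid.symm ▸ hbL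
  | star_id =>
      have hid : cfcₙHom (R := ℝ) hb (ContinuousMapZero.id (quasispectrum ℝ b)) = b := cfcₙHom_id hb
      rw [map_star, hid, hb.star_eq]
      exact hbL
  | add f g hf hg => rw [map_add]; exact L.add_mem hf hg
  | mul f g hf hg => rw [map_mul]; exact hmulL _ _ hg
  | smul r f hf =>
      rw [map_smul]
      exact (L.restrictScalars ℝ).smul_mem r hf
  | frequently f hf =>
      exact hf.mem_of_closed <| (hLc.preimage (cfcₙHom_continuous hb))

lemma aux_hereditary (L : Submodule ℂ A) (hLc : IsClosed (L : Set A))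
    (hmulL : ∀ a z : A, z ∈ L → a * z ∈ L)
    {x b : A} (hbL : b ∈ L) (hx : 0 ≤ x) (hxb : x ≤ b) : x ∈ L := by
  have hb0 : 0 ≤ b := hx.trans hxb
  have hbsa : IsSelfAdjoint b := .of_nonneg hb0
  set s := CFC.sqrt x with hs_def
  have hs0 : 0 ≤ s := CFC.sqrt_nonneg x
  have hssa : IsSelfAdjoint s := .of_nonneg hs0
  have hss : s * s = x := CFC.sqrt_mul_sqrt_self x hx
  -- the functions
  set g : ℕ → ℝ → ℝ := fun n t => (((n : ℝ) + 1) * |t|) / (1 + ((n : ℝ) + 1) * |t|) with hg_def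
  have hgcont : ∀ n, Continuous (g n) := by
    intro n
    exact Continuous.div (by fun_prop) (by fun_prop) (fun t => by positivity)
  have hg0 : ∀ n, g n 0 = 0 := fun n => by simp [hg_def]
  have hg_nonneg : ∀ n t, 0 ≤ g n t := fun n t => by positivity
  have hg_le_one : ∀ n t, g n t ≤ 1 := fun n t => by
    rw [div_le_one (by positivity)]; linarith
  set e : ℕ → A := fun n => cfcₙ (g n) b with he_def
  have heL : ∀ n, e n ∈ L := by
    intro n
    rw [he_def]
    simp only
    rw [cfcₙ_apply (g n) b ((hgcont n).continuousOn) (hg0 n) hbsa]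
    exact aux_cfcnHom_mem L hLc hmulL hbsa hbL _
  have he0 : ∀ n, 0 ≤ e n := fun n => cfcₙ_nonneg (fun t _ => hg_nonneg n t)
  have hesa : ∀ n, IsSelfAdjoint (e n) := fun n => .of_nonneg (he0 n)
  have hene : ∀ n, ‖e n‖ ≤ 1 := fun n => norm_cfcₙ_le fun t _ => by
      rw [Real.norm_eq_abs, abs_of_nonneg (hg_nonneg n t)]; exact hg_le_one n t
  -- the key estimate
  have key : ∀ n : ℕ, ‖s - e n * s‖ ≤ Real.sqrt (1 / ((n : ℝ) + 1)) := by
    intro n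
    refine CStarAlgebra.norm_sub_mul_self_le_of_inr s (he0 n) le_rfl (hene n)
      (Real.sqrt_nonneg _) ?_
    rw [Real.sq_sqrt (by positivity)]
    -- work in the unitization
    have hbb0 : (0 : Unitization ℂ A) ≤ (b : Unitization ℂ A) := inr_nonneg_iff.mpr hb0
    have hbbsa : IsSelfAdjoint (b : Unitization ℂ A) := .of_nonneg hbb0
    set k : ℝ → ℝ := fun t => 1 - g n t with hk_def
    have hkcont : Continuous k := by fun_prop
    have hk_nonneg : ∀ t, 0 ≤ k t := fun t => by
      simp only [hk_def, sub_nonneg]; exact hg_le_one n t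
    have hkeq : ∀ t, k t = 1 / (1 + ((n : ℝ) + 1) * |t|) := fun t => by
      rw [hk_def]
      simp only [hg_def]
      field_simp
      ring
    have hkscont : Continuous (fun t => Real.sqrt (k t)) := Real.continuous_sqrt.comp hkcont
    have hie : ((e n : A) : Unitization ℂ A) = cfc (g n) (b : Unitization ℂ A) :=
      Unitization.real_cfcₙ_eq_cfc_inr b (g n) (hg0 n)
    have hw : 1 - ((e n : A) : Unitization ℂ A) = cfc k (b : Unitization ℂ A) := by
      rw [hie, hk_def]
      rw [cfc_sub (fun _ => (1 : ℝ)) (g n) (b : Unitization ℂ A) (by fun_prop)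
        ((hgcont n).continuousOn)]
      rw [cfc_const_one ℝ (b : Unitization ℂ A)]
    set v : Unitization ℂ A := cfc (fun t => Real.sqrt (k t)) (b : Unitization ℂ A) with hv_def
    have hvsa : IsSelfAdjoint v := cfc_predicate _ _
    have hvv : v * v = cfc k (b : Unitization ℂ A) := by
      rw [hv_def, ← cfc_mul _ _ (b : Unitization ℂ A) hkscont.continuousOn hkscont.continuousOn]
      exact cfc_congr fun t _ => Real.mul_self_sqrt (hk_nonneg t)
    have hsssa : IsSelfAdjoint (s : Unitization ℂ A) := by
      rw [isSelfAdjoint_iff, ← Unitization.inr_star, hssa.star_eq]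
    have hstep : star (s : Unitization ℂ A) * (1 - ((e n : A) : Unitization ℂ A)) *
        (s : Unitization ℂ A) = star (v * (s : Unitization ℂ A)) * (v * (s : Unitization ℂ A)) := by
      rw [hw, ← hvv, hsssa.star_eq, star_mul, hvsa.star_eq, hsssa.star_eq]
      simp only [mul_assoc]
    rw [hstep, CStarRing.norm_star_mul_self]
    have hnorm2 : ‖v * (s : Unitization ℂ A)‖ * ‖v * (s : Unitization ℂ A)‖ =
        ‖(v * (s : Unitization ℂ A)) * star (v * (s : Unitization ℂ A))‖ :=
      (CStarRing.norm_self_mul_star).symm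
    rw [hnorm2, star_mul, hvsa.star_eq, hsssa.star_eq]
    have hxx : v * (s : Unitization ℂ A) * ((s : Unitization ℂ A) * v) =
        v * ((x : A) : Unitization ℂ A) * v := by
      rw [mul_assoc v (s : Unitization ℂ A) _, ← mul_assoc (s : Unitization ℂ A) _ v,
        ← Unitization.inr_mul, hss, ← mul_assoc]
    rw [hxx]
    have hxx0 : (0 : Unitization ℂ A) ≤ v * ((x : A) : Unitization ℂ A) * v := by
      have := star_left_conjugate_nonneg (inr_nonneg_iff.mpr hx) v
      rwa [hvsa.star_eq] at this
    have hmono : v * ((x : A) : Unitization ℂ A) * v ≤ v * (b : Unitization ℂ A) * v := by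
      have hxb' : ((x : A) : Unitization ℂ A) ≤ (b : Unitization ℂ A) :=
        (inr_le_iff x b (.of_nonneg hx) hbsa).mpr hxb
      have := star_left_conjugate_le_conjugate hxb' v
      rwa [hvsa.star_eq] at this
    refine le_trans (CStarAlgebra.norm_le_norm_of_nonneg_of_le hxx0 hmono) ?_
    have hvbv : cfc (fun t => Real.sqrt (k t) * t * Real.sqrt (k t)) (b : Unitization ℂ A) =
        v * (b : Unitization ℂ A) * v := by
      rw [cfc_mul (fun t => Real.sqrt (k t) * t) (fun t => Real.sqrt (k t))
          (b : Unitization ℂ A) ((hkscont.mul continuous_id).continuousOn) hkscont.continuousOn,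
        cfc_mul (fun t => Real.sqrt (k t)) (fun t : ℝ => t) (b : Unitization ℂ A)
          hkscont.continuousOn (continuousOn_id' _),
        cfc_id' ℝ (b : Unitization ℂ A)]
    rw [← hvbv]
    refine norm_cfc_le (by positivity) fun t ht => ?_
    have ht0 : 0 ≤ t := spectrum_nonneg_of_nonneg hbb0 ht
    have habs : |t| = t := abs_of_nonneg ht0
    rw [Real.norm_eq_abs]
    have hval : Real.sqrt (k t) * t * Real.sqrt (k t) = k t * t := by
      rw [mul_comm (Real.sqrt (k t)) t, mul_assoc, Real.mul_self_sqrt (hk_nonneg t)]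
      ring
    rw [hval, hkeq t, habs, abs_of_nonneg (by positivity)]
    rw [div_mul_eq_mul_div, one_mul, div_le_div_iff₀ (by positivity) (by positivity)]
    nlinarith [ht0]
  -- conclude
  have hlim : Tendsto (fun n : ℕ => s * e n) atTop (𝓝 s) := by
    rw [tendsto_iff_norm_sub_tendsto_zero]
    have hbd : ∀ n : ℕ, ‖s * e n - s‖ ≤ Real.sqrt (1 / ((n : ℝ) + 1)) := by
      intro n
      rw [norm_sub_rev]
      have heq : s - s * e n = star (s - e n * s) := by
        rw [star_sub, star_mul, hssa.star_eq, (hesa n).star_eq]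
      rw [heq, norm_star]
      exact key n
    refine squeeze_zero (fun n => norm_nonneg _) hbd ?_
    have h1 : Tendsto (fun n : ℕ => 1 / ((n : ℝ) + 1)) atTop (𝓝 0) :=
      tendsto_one_div_add_atTop_nhds_zero_nat
    have h2 := (Real.continuous_sqrt.tendsto 0).comp h1
    rw [Real.sqrt_zero] at h2
    exact h2
  have hsL : s ∈ L :=
    hLc.mem_of_tendsto hlim (Filter.Eventually.of_forall fun n => hmulL s (e n) (heL n))
  rw [← hss]
  exact hmulL s s hsL

end Aux

section Main

variable {A : Type*} [NonUnitalCStarAlgebra A] [PartialOrder A] [StarOrderedRing A]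

-- generators of the closed left ideal generated by `S`
def genT (S : Set A) : Set A := S ∪ {z | ∃ a : A, ∃ s ∈ S, z = a * s}

/-- The closed left ideal generated by `S`. -/
def genL (S : Set A) : Submodule ℂ A := (Submodule.span ℂ (genT S)).topologicalClosure

lemma genL_closed (S : Set A) : IsClosed (genL S : Set A) :=
  Submodule.isClosed_topologicalClosure _

lemma subset_genL (S : Set A) : S ⊆ genL S := fun s hs =>
  (Submodule.le_topologicalClosure _) (Submodule.subset_span (Or.inl hs))

lemma genL_mul_mem (S : Set A) (a : A) {z : A} (hz : z ∈ genL S) : a * z ∈ genL S := by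
  have hmaps : Set.MapsTo (a * ·) (Submodule.span ℂ (genT S) : Set A)
      (Submodule.span ℂ (genT S) : Set A) := by
    intro w hw
    simp only [SetLike.mem_coe] at hw ⊢
    induction hw using Submodule.span_induction with
    | mem w hw =>
        refine Submodule.subset_span ?_
        rcases hw with hw | ⟨a', s, hs, rfl⟩
        · exact Or.inr ⟨a, w, hw, rfl⟩
        · exact Or.inr ⟨a * a', s, hs, by rw [mul_assoc]⟩
    | zero => simpa using Submodule.zero_mem _
    | add u v hu hv ihu ihv => simpa [mul_add] using Submodule.add_mem _ ihu ihv
    | smul c u hu ihu => simpa [mul_smul_comm] using Submodule.smul_mem _ c ihu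
  have : z ∈ closure (Submodule.span ℂ (genT S) : Set A) := hz
  exact map_mem_closure (continuous_mul_left a) this hmaps

/-- The hereditary `*`-subalgebra `L ∩ L*` associated to the closed left ideal. -/
def genB (S : Set A) : NonUnitalStarSubalgebra ℂ A where
  carrier := {z | z ∈ genL S ∧ star z ∈ genL S}
  add_mem' := fun {z w} hz hw => ⟨Submodule.add_mem _ hz.1 hw.1, by
    rw [star_add]; exact Submodule.add_mem _ hz.2 hw.2⟩
  zero_mem' := ⟨Submodule.zero_mem _, by rw [star_zero]; exact Submodule.zero_mem _⟩
  mul_mem' := fun {z w} hz hw => ⟨genL_mul_mem S z hw.1, by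
    rw [star_mul]; exact genL_mul_mem S (star w) hz.2⟩
  smul_mem' := fun c z hz => ⟨Submodule.smul_mem _ c hz.1, by
    rw [star_smul]; exact Submodule.smul_mem _ _ hz.2⟩
  star_mem' := fun {z} hz => ⟨hz.2, by rw [star_star]; exact hz.1⟩

lemma mem_genB {S : Set A} {z : A} : z ∈ genB S ↔ z ∈ genL S ∧ star z ∈ genL S := Iff.rfl

lemma genB_isClosed (S : Set A) : IsClosed ((genB S : NonUnitalStarSubalgebra ℂ A) : Set A) := by
  have : ((genB S : NonUnitalStarSubalgebra ℂ A) : Set A)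
      = (genL S : Set A) ∩ star ⁻¹' (genL S : Set A) := rfl
  rw [this]
  exact (genL_closed S).inter ((genL_closed S).preimage continuous_star)

lemma genB_hereditary (S : Set A) : ∀ b ∈ genB S, ∀ z : A, 0 ≤ z → z ≤ b → z ∈ genB S := by
  intro b hb z hz0 hzb
  have hz : z ∈ genL S := aux_hereditary (genL S) (genL_closed S)
    (fun a w hw => genL_mul_mem S a hw) hb.1 hz0 hzb
  exact ⟨hz, by rw [(IsSelfAdjoint.of_nonneg hz0).star_eq]; exact hz⟩

end Main

/-- For a group `H` acting on a C*-algebra `A` by *-algebra automorphisms,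
topological transitivity (every pair of nonzero `H`-invariant hereditary closed
*-subalgebras has nonzero product) is equivalent to: for every pair of nonzero
`x, y ∈ A` there is `h ∈ H` with `x·β_h(y) ≠ 0`. -/
theorem topologically_transitive_iff
    (A : Type*) [NonUnitalCStarAlgebra A] [PartialOrder A] [StarOrderedRing A]
    (H : Type*) [Group H]
    (β : H →* RingAut A)
    (hstar : ∀ (h : H) (a : A), β h (star a) = star (β h a))
    (hsmul : ∀ (h : H) (c : ℂ) (a : A), β h (c • a) = c • β h a) :
    (∀ B₁ B₂ : NonUnitalStarSubalgebra ℂ A,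
        IsClosed (B₁ : Set A) → IsClosed (B₂ : Set A) →
        (∀ b ∈ B₁, ∀ x : A, 0 ≤ x → x ≤ b → x ∈ B₁) →
        (∀ b ∈ B₂, ∀ x : A, 0 ≤ x → x ≤ b → x ∈ B₂) →
        (∀ h : H, (β h) '' (B₁ : Set A) = (B₁ : Set A)) →
        (∀ h : H, (β h) '' (B₂ : Set A) = (B₂ : Set A)) →
        B₁ ≠ ⊥ → B₂ ≠ ⊥ →
        ∃ b₁ ∈ B₁, ∃ b₂ ∈ B₂, b₁ * b₂ ≠ 0)
    ↔ (∀ x y : A, x ≠ 0 → y ≠ 0 → ∃ h : H, x * β h y ≠ 0) := by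
  -- the action is by continuous maps
  have hcont : ∀ h : H, Continuous (β h) := by
    intro h
    let φ : A →⋆ₙₐ[ℂ] A :=
      { toFun := β h
        map_add' := map_add (β h)
        map_mul' := map_mul (β h)
        map_smul' := hsmul h
        map_zero' := map_zero (β h)
        map_star' := hstar h }
    exact (NonUnitalStarAlgHom.isometry φ (β h).injective).continuous
  have hβcomp : ∀ (g h : H) (a : A), β g (β h a) = β (g * h) a := by
    intro g h a
    rw [map_mul β g h]
    rfl
  have hβinv : ∀ (h : H) (a : A), β h (β h⁻¹ a) = a := by
    intro h a
    rw [hβcomp, mul_inv_cancel, map_one β]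
    rfl
  have hβ1 : ∀ a : A, β 1 a = a := fun a => by rw [map_one β]; rfl
  constructor
  · -- (i) → (ii)
    intro htop x y hx hy
    by_contra hcon
    push_neg at hcon
    set p : A := star x * x with hp_def
    set q : A := y * star y with hq_def
    have hp_sa : star p = p := by rw [hp_def, star_mul, star_star]
    have hq_sa : star q = q := by rw [hq_def, star_mul, star_star]
    have hp0 : p ≠ 0 := by
      rw [hp_def]
      exact fun h => hx ((CStarRing.star_mul_self_eq_zero_iff x).mp h)
    have hq0 : q ≠ 0 := by
      rw [hq_def]
      intro h
      exact hy ((CStarRing.mul_star_self_eq_zero_iff y).mp h)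
    -- the key vanishing property
    have hxq : ∀ k : H, x * β k q = 0 := by
      intro k
      rw [hq_def, map_mul, ← mul_assoc, hcon k, zero_mul]
    have hkey : ∀ g h : H, β g p * β h q = 0 := by
      intro g h
      have h2 : β g x * β h q = 0 := by
        have h3 : β g (β (g⁻¹ * h) q) = β h q := by
          rw [hβcomp, mul_inv_cancel_left]
        rw [← h3, ← map_mul (β g), hxq (g⁻¹ * h), map_zero]
      rw [hp_def, map_mul, mul_assoc, h2, mul_zero]
    set S₁ : Set A := Set.range (fun h : H => β h p) with hS₁_def
    set S₂ : Set A := Set.range (fun h : H => β h q) with hS₂_def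
    -- star of elements of S₂ and S₁
    have hS₂star : ∀ h : H, star (β h q) = β h q := fun h => by rw [← hstar, hq_sa]
    have hS₁star : ∀ h : H, star (β h p) = β h p := fun h => by rw [← hstar, hp_sa]
    -- products vanish on generators
    have hTT : ∀ z ∈ genT S₁, ∀ w ∈ genT S₂, z * star w = 0 := by
      rintro z hz w hw
      rcases hz with ⟨g, rfl⟩ | ⟨a₁, s₁, ⟨g, rfl⟩, rfl⟩ <;>
        rcases hw with ⟨h, rfl⟩ | ⟨a₂, s₂, ⟨h, rfl⟩, rfl⟩
      · rw [hS₂star, hkey]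
      · rw [star_mul, hS₂star, ← mul_assoc, hkey, zero_mul]
      · rw [hS₂star, mul_assoc, hkey, mul_zero]
      · rw [star_mul, hS₂star, mul_assoc a₁, ← mul_assoc (β g p), hkey, zero_mul, mul_zero]
    have hTL : ∀ z ∈ genT S₁, ∀ w ∈ genL S₂, z * star w = 0 := by
      intro z hz w hw
      have hK : IsClosed {w : A | z * star w = 0} :=
        isClosed_eq (((continuous_mul_left z).comp continuous_star)) continuous_const
      have hspan : (Submodule.span ℂ (genT S₂) : Set A) ⊆ {w : A | z * star w = 0} := by
        intro w hw
        simp only [SetLike.mem_coe] at hw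
        induction hw using Submodule.span_induction with
        | mem w hw => exact hTT z hz w hw
        | zero => simp
        | add u v hu hv ihu ihv =>
            simp only [Set.mem_setOf_eq] at ihu ihv ⊢
            rw [star_add, mul_add, ihu, ihv, add_zero]
        | smul c u hu ihu =>
            simp only [Set.mem_setOf_eq] at ihu ⊢
            rw [star_smul, mul_smul_comm, ihu, smul_zero]
      exact closure_minimal hspan hK hw
    have hLL : ∀ z ∈ genL S₁, ∀ w ∈ genL S₂, z * star w = 0 := by
      intro z hz w hw
      have hK : IsClosed {z : A | z * star w = 0} :=
        isClosed_eq (continuous_mul_right (star w)) continuous_const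
      have hspan : (Submodule.span ℂ (genT S₁) : Set A) ⊆ {z : A | z * star w = 0} := by
        intro z hz
        simp only [SetLike.mem_coe] at hz
        induction hz using Submodule.span_induction with
        | mem z hz => exact hTL z hz w hw
        | zero => simp
        | add u v hu hv ihu ihv =>
            simp only [Set.mem_setOf_eq] at ihu ihv ⊢
            rw [add_mul, ihu, ihv, add_zero]
        | smul c u hu ihu =>
            simp only [Set.mem_setOf_eq] at ihu ⊢
            rw [smul_mul_assoc, ihu, smul_zero]
      exact closure_minimal hspan hK hz
    -- invariance of the ideals
    have hLinv : ∀ (r : A) (hr_sa : star r = r), (∀ g h : H, ∃ k : H, β g (β h r) = β k r) →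
        ∀ h : H, ∀ z ∈ genL (Set.range fun h : H => β h r), β h z ∈
          genL (Set.range fun h : H => β h r) := by
      intro r hr_sa hcomp h z hz
      set S : Set A := Set.range (fun h : H => β h r)
      have hmaps : Set.MapsTo (β h) (Submodule.span ℂ (genT S) : Set A)
          (Submodule.span ℂ (genT S) : Set A) := by
        intro w hw
        simp only [SetLike.mem_coe] at hw ⊢
        induction hw using Submodule.span_induction with
        | mem w hw =>
            refine Submodule.subset_span ?_
            rcases hw with ⟨g, rfl⟩ | ⟨a, s, ⟨g, rfl⟩, rfl⟩
            · obtain ⟨k, hk⟩ := hcomp h g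
              exact Or.inl ⟨k, hk.symm⟩
            · obtain ⟨k, hk⟩ := hcomp h g
              exact Or.inr ⟨β h a, β k r, ⟨k, rfl⟩, by rw [map_mul, hk]⟩
        | zero => simpa using Submodule.zero_mem _
        | add u v hu hv ihu ihv => simpa [map_add] using Submodule.add_mem _ ihu ihv
        | smul c u hu ihu => simpa [hsmul h] using Submodule.smul_mem _ c ihu
      exact map_mem_closure (hcont h) hz hmaps
    have hBinv : ∀ (r : A) (hr_sa : star r = r),
        ∀ h : H, (β h) '' ((genB (Set.range fun h : H => β h r)
            : NonUnitalStarSubalgebra ℂ A) : Set A) =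
          ((genB (Set.range fun h : H => β h r) : NonUnitalStarSubalgebra ℂ A) : Set A) := by
      intro r hr_sa h
      have hcomp : ∀ g h' : H, ∃ k : H, β g (β h' r) = β k r := by
        intro g h'
        exact ⟨g * h', hβcomp g h' r⟩
      have hsub : ∀ h : H, ∀ z ∈ genB (Set.range fun h : H => β h r),
          β h z ∈ genB (Set.range fun h : H => β h r) := by
        intro h z hz
        refine ⟨hLinv r hr_sa hcomp h z hz.1, ?_⟩
        rw [← hstar h z]
        exact hLinv r hr_sa hcomp h (star z) hz.2
      apply Set.eq_of_subset_of_subset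
      · rintro _ ⟨z, hz, rfl⟩
        exact hsub h z hz
      · intro z hz
        exact ⟨β h⁻¹ z, hsub h⁻¹ z hz, hβinv h z⟩
    -- nonzero elements
    have hmem₁ : p * p ∈ genB S₁ := by
      have hp_mem : p ∈ genL S₁ := subset_genL S₁ ⟨1, hβ1 p⟩
      have : p * p ∈ genL S₁ := genL_mul_mem S₁ p hp_mem
      exact ⟨this, by rw [star_mul, hp_sa]; exact this⟩
    have hmem₂ : q * q ∈ genB S₂ := by
      have hq_mem : q ∈ genL S₂ := subset_genL S₂ ⟨1, hβ1 q⟩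
      have : q * q ∈ genL S₂ := genL_mul_mem S₂ q hq_mem
      exact ⟨this, by rw [star_mul, hq_sa]; exact this⟩
    have hsq_ne : ∀ r : A, star r = r → r ≠ 0 → r * r ≠ 0 := by
      intro r hr_sa hr hrr
      apply hr
      have h1 : ‖r‖ * ‖r‖ = 0 := by
        rw [← CStarRing.norm_star_mul_self (x := r), hr_sa, hrr, norm_zero]
      rcases mul_self_eq_zero.mp h1 with h2
      exact norm_eq_zero.mp h2
    have hbot₁ : genB S₁ ≠ ⊥ := by
      intro hb
      rw [hb, NonUnitalStarAlgebra.mem_bot] at hmem₁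
      exact hsq_ne p hp_sa hp0 hmem₁
    have hbot₂ : genB S₂ ≠ ⊥ := by
      intro hb
      rw [hb, NonUnitalStarAlgebra.mem_bot] at hmem₂
      exact hsq_ne q hq_sa hq0 hmem₂
    obtain ⟨b₁, hb₁, b₂, hb₂, hne⟩ := htop (genB S₁) (genB S₂)
      (genB_isClosed S₁) (genB_isClosed S₂) (genB_hereditary S₁) (genB_hereditary S₂)
      (hBinv p hp_sa) (hBinv q hq_sa) hbot₁ hbot₂
    apply hne
    have := hLL b₁ hb₁.1 (star b₂) hb₂.2
    rwa [star_star] at this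
  · -- (ii) → (i)
    intro helem B₁ B₂ hc₁ hc₂ hher₁ hher₂ hinv₁ hinv₂ hbot₁ hbot₂
    have hex : ∀ (B : NonUnitalStarSubalgebra ℂ A), B ≠ ⊥ → ∃ b ∈ B, b ≠ 0 := by
      intro B hB
      by_contra hcon
      push_neg at hcon
      apply hB
      apply SetLike.ext
      intro z
      rw [NonUnitalStarAlgebra.mem_bot]
      exact ⟨fun hz => hcon z hz, fun hz => hz ▸ B.zero_mem⟩
    obtain ⟨b₁, hb₁, hb₁0⟩ := hex B₁ hbot₁
    obtain ⟨b₂, hb₂, hb₂0⟩ := hex B₂ hbot₂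
    obtain ⟨h, hh⟩ := helem b₁ b₂ hb₁0 hb₂0
    refine ⟨b₁, hb₁, β h b₂, ?_, hh⟩
    have : β h b₂ ∈ (β h) '' (B₂ : Set A) := ⟨b₂, hb₂, rfl⟩
    rwa [hinv₂ h] at this
end

section
/- Let A be a unital prime C*-algebra, G a finite abelian group, and α a faithful action of G on A by *-algebra automorphisms. Suppose that the fixed point algebra A^α is prime and that every *-algebra automorphism β of A satisfying β(a) = a for all a ∈ A^α equals α_g for some g ∈ G. Then every element z ∈ A that commutes with all elements of A^α is a scalar multiple of the identity; that is, (A^α)' ∩ A = ℂ·1. -/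
open NormedSpace

/-- Derivative trick: if `exp (t • x)` commutes with `a` for all real `t`, then `x` does. -/
lemma exp_comm_deriv_aux {A : Type*} [CStarAlgebra A] (x a : A)
    (hcomm : ∀ t : ℝ, exp (t • x) * a = a * exp (t • x)) : x * a = a * x := by
  have h1 : HasDerivAt (fun t : ℝ => exp (t • x) * a) (exp ((0:ℝ) • x) * x * a) 0 :=
    (hasDerivAt_exp_smul_const x (0:ℝ)).mul_const a
  have h2 : HasDerivAt (fun t : ℝ => a * exp (t • x)) (a * (exp ((0:ℝ) • x) * x)) 0 :=
    (hasDerivAt_exp_smul_const x (0:ℝ)).const_mul a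
  have h3 : (fun t : ℝ => exp (t • x) * a) = fun t : ℝ => a * exp (t • x) := funext hcomm
  have h1' : HasDerivAt (fun t : ℝ => a * exp (t • x)) (exp ((0:ℝ) • x) * x * a) 0 := by
    rw [← h3]; exact h1
  have := h1'.unique h2
  simpa [zero_smul, exp_zero] using this

/-- Inner algebra automorphism given a two-sided invertible element. -/
noncomputable def innerAut {A : Type*} [CStarAlgebra A] (u v : A)
    (huv : u * v = 1) (hvu : v * u = 1) : A ≃ₐ[ℂ] A where
  toFun a := u * a * v
  invFun a := v * a * u
  left_inv a := by
    calc v * (u * a * v) * u = (v * u) * (a * (v * u)) := by simp only [mul_assoc]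
    _ = a := by rw [hvu, one_mul, mul_one]
  right_inv a := by
    calc u * (v * a * u) * v = (u * v) * (a * (u * v)) := by simp only [mul_assoc]
    _ = a := by rw [huv, one_mul, mul_one]
  map_mul' a b := by
    show u * (a * b) * v = (u * a * v) * (u * b * v)
    calc u * (a * b) * v = u * (a * (1 : A) * (b * v)) := by simp only [mul_one, mul_assoc]
    _ = u * (a * (v * u) * (b * v)) := by rw [hvu]
    _ = (u * a * v) * (u * b * v) := by simp only [mul_assoc]
  map_add' a b := by simp [mul_add, add_mul]
  commutes' c := by
    simp only [Algebra.algebraMap_eq_smul_one]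
    rw [mul_smul_comm, mul_one, smul_mul_assoc, huv]

lemma isClosed_centralizer {A : Type*} [CStarAlgebra A] (T : Set A) :
    IsClosed (Set.centralizer T) := by
  have : Set.centralizer T = ⋂ s ∈ T, {x : A | s * x = x * s} := by
    ext x; simp [Set.mem_centralizer_iff]
  rw [this]
  exact isClosed_biInter fun s _ =>
    isClosed_eq (continuous_const.mul continuous_id) (continuous_id.mul continuous_const)

/-- In a C*-algebra, a central element commutes with the continuous functional calculus. -/
lemma cfc_central {A : Type*} [CStarAlgebra A] (z : A) [IsStarNormal z]
    (hcentral : ∀ a : A, z * a = a * z) (f : ℂ → ℂ) (a : A) :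
    cfc f z * a = a * cfc f z := by
  have hmem : cfc f z ∈ StarAlgebra.elemental ℂ z := by
    by_cases hf : ContinuousOn f (spectrum ℂ z)
    · rw [cfc_apply f z, cfcHom_eq_of_isStarNormal]
      exact Subtype.coe_prop _
    · rw [cfc_apply_of_not_continuousOn z hf]
      exact zero_mem _
  have hle : StarAlgebra.elemental ℂ z ≤ StarSubalgebra.centralizer ℂ {a} := by
    apply StarAlgebra.elemental.le_of_mem
    · have : (StarSubalgebra.centralizer ℂ {a} : Set A) = Set.centralizer ({a} ∪ star {a}) :=
        StarSubalgebra.coe_centralizer ℂ {a}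
      rw [this]; exact isClosed_centralizer _
    · rw [StarSubalgebra.mem_centralizer_iff]
      rintro g rfl
      exact ⟨(hcentral _).symm, (hcentral _).symm⟩
  have := hle hmem
  rw [StarSubalgebra.mem_centralizer_iff] at this
  exact ((this a rfl).1).symm

/-- A central normal element of a "prime" unital C*-algebra is a scalar. -/
lemma central_normal_is_scalar {A : Type*} [CStarAlgebra A]
    (hprimeA : ∀ x y : A, (∀ a : A, x * a * y = 0) → x = 0 ∨ y = 0)
    (z : A) [IsStarNormal z] (hcentral : ∀ a : A, z * a = a * z) :
    ∃ c : ℂ, z = c • (1 : A) := by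
  obtain (h | h) := subsingleton_or_nontrivial A
  · exact ⟨0, Subsingleton.elim _ _⟩
  obtain ⟨lam, hlam⟩ := spectrum.nonempty z
  refine ⟨lam, ?_⟩
  have hspec : ∀ μ ∈ spectrum ℂ z, μ = lam := by
    intro μ hμ
    by_contra hne
    set d : ℝ := dist lam μ with hd
    have hd0 : 0 < d := dist_pos.mpr (fun h => hne h.symm)
    set f : ℂ → ℂ := fun w => ((max 0 (1 - 2 * dist w lam / d) : ℝ) : ℂ) with hf
    set g : ℂ → ℂ := fun w => ((max 0 (1 - 2 * dist w μ / d) : ℝ) : ℂ) with hg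
    have hfc : Continuous f := by fun_prop
    have hgc : Continuous g := by fun_prop
    have hfg : ∀ w, f w * g w = 0 := by
      intro w
      rcases le_or_gt (d / 2) (dist w lam) with hcase | hcase
      · have : 1 - 2 * dist w lam / d ≤ 0 := by
          rw [sub_nonpos, le_div_iff₀ hd0]
          nlinarith
        simp [hf, max_eq_left this]
      · have hwl : d / 2 ≤ dist w μ := by
          have := dist_triangle lam w μ
          have h1 : dist lam w = dist w lam := dist_comm lam w
          linarith
        have : 1 - 2 * dist w μ / d ≤ 0 := by
          rw [sub_nonpos, le_div_iff₀ hd0]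
          nlinarith
        simp [hg, max_eq_left this]
    have hx0 : cfc f z ≠ 0 := by
      intro h0
      have h1 : ‖f lam‖ ≤ ‖cfc f z‖ := norm_apply_le_norm_cfc f z hlam hfc.continuousOn
      rw [h0, norm_zero] at h1
      have : f lam = 1 := by simp [hf]
      rw [this] at h1; norm_num at h1
    have hy0 : cfc g z ≠ 0 := by
      intro h0
      have h1 : ‖g μ‖ ≤ ‖cfc g z‖ := norm_apply_le_norm_cfc g z hμ hgc.continuousOn
      rw [h0, norm_zero] at h1
      have : g μ = 1 := by simp [hg, dist_self]
      rw [this] at h1; norm_num at h1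
    have hxy : cfc f z * cfc g z = 0 := by
      rw [← cfc_mul f g z hfc.continuousOn hgc.continuousOn]
      calc cfc (fun w => f w * g w) z = cfc (fun _ : ℂ => (0 : ℂ)) z :=
            cfc_congr (fun w _ => hfg w)
      _ = 0 := by simp
    rcases hprimeA (cfc f z) (cfc g z) (fun a => by
      rw [cfc_central z hcentral f a]
      rw [mul_assoc, hxy, mul_zero]) with h | h
    · exact hx0 h
    · exact hy0 h
  calc z = cfc (id : ℂ → ℂ) z := (cfc_id ℂ z).symm
  _ = cfc (fun _ : ℂ => lam) z := cfc_congr (fun w hw => hspec w hw)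
  _ = lam • 1 := by rw [cfc_const lam z, Algebra.algebraMap_eq_smul_one]

lemma smul_cancel_aux {A : Type*} [CStarAlgebra A] (c : ℂ) (hc : c ≠ 0) {v w : A}
    (h : c • v = c • w) : v = w := by
  have := congrArg (fun u => c⁻¹ • u) h
  simpa [smul_smul, inv_mul_cancel₀ hc] using this


/-- STATEMENT 10 (g) ⇒ b) of Theorem 12): Let `α` be a faithful action of a finite
abelian group `G` on a unital prime C*-algebra `A`.  If `A^α` is prime and every
*-automorphism of `A` fixing `A^α` pointwise equals some `α_g`, then
`(A^α)' ∩ A = ℂ·1`. -/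
theorem duality_implies_trivial_relative_commutant
    (A : Type*) [CStarAlgebra A]
    (hprimeA : ∀ x y : A, (∀ a : A, x * a * y = 0) → x = 0 ∨ y = 0)
    (G : Type*) [CommGroup G] [Fintype G]
    (α : G →* (A ≃ₐ[ℂ] A))
    (hαstar : ∀ (g : G) (a : A), α g (star a) = star (α g a))
    (hfaithful : ∀ g : G, (∀ a : A, α g a = a) → g = 1)
    (hprimefix : ∀ x y : A, (∀ g : G, α g x = x) → (∀ g : G, α g y = y) →
        (∀ b : A, (∀ g : G, α g b = b) → x * b * y = 0) → x = 0 ∨ y = 0)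
    (hduality : ∀ β : A ≃ₐ[ℂ] A, (∀ a : A, β (star a) = star (β a)) →
        (∀ a : A, (∀ g : G, α g a = a) → β a = a) → ∃ g : G, β = α g)
    (z : A) (hz : ∀ a : A, (∀ g : G, α g a = a) → z * a = a * z) :
    ∃ c : ℂ, z = c • (1 : A) := by
  -- α is injective in a pointwise sense
  have happ : ∀ (g1 g2 : G) (a : A), α (g1 * g2) a = α g1 (α g2 a) := by
    intro g1 g2 a; rw [map_mul]; rfl
  have hαinj : ∀ g1 g2 : G, (∀ a : A, α g1 a = α g2 a) → g1 = g2 := by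
    intro g1 g2 hgg
    have h1 : ∀ a : A, α (g2⁻¹ * g1) a = a := by
      intro a
      rw [happ, hgg, ← happ, inv_mul_cancel, map_one]
      rfl
    exact (inv_mul_eq_one.mp (hfaithful _ h1)).symm
  -- Main step: a selfadjoint element commuting with the fixed point algebra is central.
  have hsa_central : ∀ h : A, IsSelfAdjoint h →
      (∀ a : A, (∀ g : G, α g a = a) → h * a = a * h) → ∀ a : A, h * a = a * h := by
    intro h hh hhfix
    set x : A := Complex.I • h with hxdef
    have hxstar : star x = -x := by
      rw [hxdef, star_smul, Complex.star_def, Complex.conj_I, hh.star_eq, neg_smul]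
    have hucomm : ∀ t : ℝ, ∀ a : A, (∀ g : G, α g a = a) →
        Commute (exp (t • x)) a := by
      intro t a ha
      have hc : Commute h a := hhfix a ha
      exact ((hc.smul_left Complex.I).smul_left t).exp_left
    have humul : ∀ s t : ℝ, exp (s • x) * exp (t • x) = exp ((s + t) • x) := by
      intro s t
      rw [add_smul]
      let +nondep : NormedAlgebra ℚ A := .restrictScalars ℚ ℂ A
      exact (exp_add_of_commute (((Commute.refl x).smul_left s).smul_right t)).symm
    have hu0 : exp ((0:ℝ) • x) = 1 := by rw [zero_smul, exp_zero]
    have huinv : ∀ t : ℝ, exp (t • x) * exp ((-t) • x) = 1 := by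
      intro t; rw [humul, add_neg_cancel, hu0]
    have huinv' : ∀ t : ℝ, exp ((-t) • x) * exp (t • x) = 1 := by
      intro t; rw [humul, neg_add_cancel, hu0]
    have hustar : ∀ t : ℝ, star (exp (t • x)) = exp ((-t) • x) := by
      intro t
      rw [star_exp, star_smul, hxstar, star_trivial, smul_neg, ← neg_smul]
    -- the inner automorphisms
    let β : ℝ → (A ≃ₐ[ℂ] A) := fun t =>
      innerAut (exp (t • x)) (exp ((-t) • x)) (huinv t) (huinv' t)
    have hβ_apply : ∀ (t : ℝ) (a : A), β t a = exp (t • x) * a * exp ((-t) • x) :=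
      fun _ _ => rfl
    have hβstar : ∀ (t : ℝ) (a : A), β t (star a) = star (β t a) := by
      intro t a
      rw [hβ_apply, hβ_apply, star_mul, star_mul, hustar, hustar, neg_neg]
      simp only [mul_assoc]
    have hβfix : ∀ (t : ℝ) (a : A), (∀ g : G, α g a = a) → β t a = a := by
      intro t a ha
      rw [hβ_apply, (hucomm t a ha).eq, mul_assoc, huinv, mul_one]
    have hgex : ∀ t : ℝ, ∃ g : G, β t = α g := fun t => hduality (β t) (hβstar t) (hβfix t)
    choose gf hgf using hgex
    have ghom : ∀ s t : ℝ, gf (s + t) = gf s * gf t := by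
      intro s t
      apply hαinj
      intro a
      rw [← hgf, happ, ← hgf, ← hgf, hβ_apply, hβ_apply, hβ_apply]
      have e1 : exp ((s + t) • x) = exp (s • x) * exp (t • x) := (humul s t).symm
      have e2 : exp ((-(s + t)) • x) = exp ((-t) • x) * exp ((-s) • x) := by
        rw [humul]; ring_nf
      rw [e1, e2]
      simp only [mul_assoc]
    have g0 : gf 0 = 1 := by
      have h00 := ghom 0 0
      rw [add_zero] at h00
      exact (left_eq_mul.mp h00)
    have gpow : ∀ (n : ℕ) (t : ℝ), gf ((n : ℝ) * t) = gf t ^ n := by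
      intro n t
      induction n with
      | zero => simpa using g0
      | succ n ih =>
        push_cast
        rw [add_mul, one_mul, ghom, ih, pow_succ]
    have gtriv : ∀ t : ℝ, gf t = 1 := by
      intro t
      have hn : (Fintype.card G : ℝ) ≠ 0 := Nat.cast_ne_zero.mpr Fintype.card_ne_zero
      have hgp := gpow (Fintype.card G) (t / Fintype.card G)
      rw [mul_div_cancel₀ t hn] at hgp
      rw [hgp, pow_card_eq_one]
    have hβ1 : ∀ (t : ℝ) (a : A), β t a = a := by
      intro t a
      rw [hgf t, gtriv t, map_one]
      rfl
    intro a
    have hexpcomm : ∀ t : ℝ, exp (t • x) * a = a * exp (t • x) := by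
      intro t
      have h2 := congrArg (fun w => w * exp (t • x)) (hβ1 t a)
      simp only [hβ_apply] at h2
      rw [mul_assoc (exp (t • x) * a), huinv', mul_one] at h2
      exact h2
    have hxa : x * a = a * x := exp_comm_deriv_aux x a hexpcomm
    have : Complex.I • (h * a) = Complex.I • (a * h) := by
      rw [← smul_mul_assoc, ← mul_smul_comm]
      exact hxa
    exact smul_cancel_aux Complex.I Complex.I_ne_zero this
  -- star z also commutes with the fixed point algebra
  have hzstar : ∀ a : A, (∀ g : G, α g a = a) → star z * a = a * star z := by
    intro a ha
    have hstar_fix : ∀ g : G, α g (star a) = star a := fun g => by rw [hαstar, ha]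
    have h2 := congrArg star (hz (star a) hstar_fix)
    rw [star_mul, star_mul, star_star] at h2
    exact h2.symm
  -- real and imaginary parts
  have sa1 : IsSelfAdjoint (z + star z) := by
    simp [IsSelfAdjoint, star_add, star_star, add_comm]
  have fix1 : ∀ a : A, (∀ g : G, α g a = a) → (z + star z) * a = a * (z + star z) := by
    intro a ha
    rw [add_mul, mul_add, hz a ha, hzstar a ha]
  have sa2 : IsSelfAdjoint (Complex.I • (z - star z)) := by
    rw [IsSelfAdjoint, star_smul, Complex.star_def, Complex.conj_I, star_sub, star_star,
      neg_smul, ← smul_neg, neg_sub]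
  have fix2 : ∀ a : A, (∀ g : G, α g a = a) →
      (Complex.I • (z - star z)) * a = a * (Complex.I • (z - star z)) := by
    intro a ha
    rw [smul_mul_assoc, mul_smul_comm, sub_mul, mul_sub, hz a ha, hzstar a ha]
  have hc1 := hsa_central _ sa1 fix1
  have hc2 := hsa_central _ sa2 fix2
  -- z is central
  have hzc : ∀ a : A, z * a = a * z := by
    intro a
    have e2 : (z - star z) * a = a * (z - star z) := by
      have h2 := hc2 a
      rw [smul_mul_assoc, mul_smul_comm] at h2
      exact smul_cancel_aux Complex.I Complex.I_ne_zero h2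
    have e3 : (2:ℂ) • (z * a) = (2:ℂ) • (a * z) := by
      have h4 : ((z + star z) + (z - star z)) * a = a * ((z + star z) + (z - star z)) := by
        rw [add_mul, mul_add, hc1 a, e2]
      have h5 : (z + star z) + (z - star z) = (2:ℂ) • z := by
        rw [two_smul]; abel
      rw [h5, smul_mul_assoc, mul_smul_comm] at h4
      exact h4
    exact smul_cancel_aux 2 two_ne_zero e3
  have : IsStarNormal z := ⟨(hzc (star z)).symm⟩
  exact central_normal_is_scalar hprimeA z hzc
end

section
/- Let A be a unital prime C*-algebra, G an abelian group acting on A by *-algebra automorphisms α_g, v ∈ A a unitary, and g₀ ∈ G such that α_{g₀}(a) = v a v* for all a ∈ A. Then there exists a group homomorphism γ : G → ℂˣ with |γ(g)| = 1 such that α_g(v) = γ(g)·v for all g ∈ G. Moreover, if G is finite and Σ_{g∈G} α_g(v) ≠ 0, then γ(g) = 1 for all g, i.e., v belongs to the fixed point algebra A^α. -/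
open StarAlgebra in
lemma cfc_mem_elemental' {A : Type*} [CStarAlgebra A] (w : A) [hw : IsStarNormal w]
    (f : ℂ → ℂ) (hf : ContinuousOn f (spectrum ℂ w)) :
    cfc f w ∈ elemental ℂ w := by
  rw [cfc_apply f w hw hf, cfcHom_eq_of_isStarNormal]
  exact SetLike.coe_mem _

lemma isClosed_commutant {A : Type*} [CStarAlgebra A] (a : A) :
    IsClosed {x : A | Commute x a} :=
  isClosed_eq (continuous_id.mul continuous_const) (continuous_const.mul continuous_id)

lemma central_commute {A : Type*} [CStarAlgebra A] (w : A) [hw : IsStarNormal w]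
    (hc : ∀ a : A, Commute w a) (f : ℂ → ℂ) (hf : ContinuousOn f (spectrum ℂ w)) (a : A) :
    Commute (cfc f w) a := by
  have hS : IsClosed ((StarSubalgebra.centralizer ℂ {a} : StarSubalgebra ℂ A) : Set A) := by
    rw [StarSubalgebra.coe_centralizer]
    have : (({a} : Set A) ∪ star {a}).centralizer =
        ⋂ m ∈ ({a} : Set A) ∪ star {a}, {x : A | m * x = x * m} := by
      ext x; simp [Set.mem_centralizer_iff]
    rw [this]
    exact isClosed_biInter fun m _ => isClosed_eq (continuous_const.mul continuous_id)
      (continuous_id.mul continuous_const)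
  have hwmem : w ∈ StarSubalgebra.centralizer ℂ ({a} : Set A) := by
    rw [StarSubalgebra.mem_centralizer_iff]
    rintro g rfl
    exact ⟨(hc g).symm, (hc (star g)).symm⟩
  have := StarAlgebra.elemental.le_of_mem hS hwmem (cfc_mem_elemental' w f hf)
  rw [StarSubalgebra.mem_centralizer_iff] at this
  exact (this a rfl).1.symm

/-- A central normal element of a nontrivial prime C*-algebra is a scalar. -/
lemma central_is_scalar {A : Type*} [CStarAlgebra A] [Nontrivial A]
    (hprime : ∀ x y : A, (∀ a : A, x * a * y = 0) → x = 0 ∨ y = 0)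
    (w : A) [hw : IsStarNormal w] (hc : ∀ a : A, Commute w a) :
    ∃ μ : ℂ, w = μ • 1 := by
  obtain ⟨μ, hμ⟩ := spectrum.nonempty w
  refine ⟨μ, ?_⟩
  -- spectrum is a singleton
  have hsing : ∀ l ∈ spectrum ℂ w, l = μ := by
    intro l hl
    by_contra hne
    set r : ℝ := dist l μ / 3 with hr
    have hrpos : 0 < r := by
      have : 0 < dist l μ := dist_pos.mpr hne
      positivity
    set f : ℂ → ℂ := fun z => ((1 - dist z l / r) ⊔ 0 : ℝ) with hfdef
    set g : ℂ → ℂ := fun z => ((1 - dist z μ / r) ⊔ 0 : ℝ) with hgdef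
    have hfc : Continuous f := by
      apply Complex.continuous_ofReal.comp
      exact (continuous_const.sub ((continuous_id.dist continuous_const).div_const r)).max
        continuous_const
    have hgc : Continuous g := by
      apply Complex.continuous_ofReal.comp
      exact (continuous_const.sub ((continuous_id.dist continuous_const).div_const r)).max
        continuous_const
    have hfg : ∀ z, f z * g z = 0 := by
      intro z
      rcases le_or_gt (1 - dist z l / r) 0 with h | h
      · have : f z = 0 := by simp [hfdef, max_eq_right h]
        rw [this, zero_mul]
      rcases le_or_gt (1 - dist z μ / r) 0 with h' | h'
      · have : g z = 0 := by simp [hgdef, max_eq_right h']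
        rw [this, mul_zero]
      exfalso
      have h1 : dist z l < r := by
        have := sub_pos.mp h
        calc dist z l = dist z l / r * r := by field_simp
        _ < 1 * r := by exact mul_lt_mul_of_pos_right this hrpos
        _ = r := one_mul r
      have h2 : dist z μ < r := by
        have := sub_pos.mp h'
        calc dist z μ = dist z μ / r * r := by field_simp
        _ < 1 * r := by exact mul_lt_mul_of_pos_right this hrpos
        _ = r := one_mul r
      have : dist l μ ≤ dist z l + dist z μ := by
        calc dist l μ ≤ dist l z + dist z μ := dist_triangle l z μ
        _ = dist z l + dist z μ := by rw [dist_comm l z]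
      have : dist l μ < 2 * r := by linarith
      rw [hr] at this
      linarith [dist_pos.mpr hne]
    have hzero : ∀ a : A, cfc f w * a * cfc g w = 0 := by
      intro a
      have hcomm := central_commute w hc f hfc.continuousOn a
      rw [hcomm.eq, mul_assoc, ← cfc_mul f g w hfc.continuousOn hgc.continuousOn]
      have h0 : cfc (fun z => f z * g z) w = 0 := by
        have heq : (fun z => f z * g z) = (fun _ : ℂ => (0 : ℂ)) := funext hfg
        rw [heq, cfc_const_zero]
      rw [h0, mul_zero]
    rcases hprime _ _ hzero with h0 | h0
    · have h1 : ‖f l‖ ≤ ‖cfc f w‖ := norm_apply_le_norm_cfc f w hl hfc.continuousOn hw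
      rw [h0, norm_zero] at h1
      have h2 : f l = 1 := by simp [hfdef, dist_self]
      rw [h2] at h1; norm_num at h1
    · have h1 : ‖g μ‖ ≤ ‖cfc g w‖ := norm_apply_le_norm_cfc g w hμ hgc.continuousOn hw
      rw [h0, norm_zero] at h1
      have h2 : g μ = 1 := by simp [hgdef, dist_self]
      rw [h2] at h1; norm_num at h1
  have h1 : cfc (fun l : ℂ => l) w = cfc (fun _ : ℂ => μ) w :=
    cfc_congr (fun l hl => hsing l hl)
  rw [cfc_id' ℂ w hw, cfc_const μ w hw] at h1
  rw [h1, Algebra.algebraMap_eq_smul_one]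


/-- If `G` is an abelian group acting on a unital prime C*-algebra `A`,
`v` is a unitary of `A` and `α_{g₀} = Ad v` for some `g₀ ∈ G`, then there is a character
`γ : G → ℂˣ` of modulus one with `α_g(v) = γ(g)·v` for all `g`.  Moreover, if `G` is
finite and `∑_{g} α_g(v) ≠ 0`, then `γ ≡ 1`, i.e. `v ∈ A^α`. -/
theorem implementing_unitary_is_eigenvector
    (A : Type*) [CStarAlgebra A]
    (hprime : ∀ x y : A, (∀ a : A, x * a * y = 0) → x = 0 ∨ y = 0)
    (G : Type*) [CommGroup G]
    (α : G →* (A ≃ₐ[ℂ] A))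
    (hαstar : ∀ (g : G) (a : A), α g (star a) = star (α g a))
    (v : A) (hv : v ∈ unitary A)
    (g₀ : G) (hg₀ : ∀ a : A, α g₀ a = v * a * star v) :
    ∃ γ : G →* ℂˣ,
      (∀ g : G, ‖(γ g : ℂ)‖ = 1) ∧
      (∀ g : G, α g v = (γ g : ℂ) • v) ∧
      (∀ _hF : Fintype G, (∑ g : G, α g v) ≠ 0 →
        (∀ g : G, γ g = 1) ∧ ∀ g : G, α g v = v) := by
  rcases subsingleton_or_nontrivial A with hsub | hnt
  · refine ⟨1, fun g => by simp, fun g => Subsingleton.elim _ _,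
      fun hF hsum => absurd (Subsingleton.elim _ _) hsum⟩
  have hv1 : star v * v = 1 := hv.1
  have hv2 : v * star v = 1 := hv.2
  have hvne : v ≠ 0 := by
    intro h
    exact one_ne_zero (α := A) (by rw [← hv1, h, mul_zero])
  have comp : ∀ (g h : G) (a : A), α g (α h a) = α (g * h) a := by
    intro g h a; rw [map_mul]; rfl
  have key : ∀ (g : G) (a : A), α g v * a * star (α g v) = v * a * star v := by
    intro g a
    have h1 : α g (α g⁻¹ a) = a := by
      rw [comp, mul_inv_cancel]
      simp [map_one α]
    calc α g v * a * star (α g v)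
        = α g v * α g (α g⁻¹ a) * α g (star v) := by rw [h1, hαstar]
      _ = α g (v * α g⁻¹ a * star v) := by rw [map_mul, map_mul]
      _ = α g (α g₀ (α g⁻¹ a)) := by rw [hg₀]
      _ = α (g * g₀ * g⁻¹) a := by rw [comp, comp]
      _ = α g₀ a := by rw [mul_comm g g₀, mul_assoc, mul_inv_cancel, mul_one]
      _ = v * a * star v := hg₀ a
  have huu : ∀ g : G, star (α g v) * α g v = 1 := by
    intro g; rw [← hαstar, ← map_mul, hv1, map_one]
  have huu' : ∀ g : G, α g v * star (α g v) = 1 := by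
    intro g; rw [← hαstar, ← map_mul, hv2, map_one]
  have hcent : ∀ (g : G) (a : A), Commute (star v * α g v) a := by
    intro g a
    show (star v * α g v) * a = a * (star v * α g v)
    calc (star v * α g v) * a
        = (star v * α g v) * a * (star (α g v) * α g v) := by rw [huu, mul_one]
      _ = star v * ((α g v * a * star (α g v)) * α g v) := by simp only [mul_assoc]
      _ = star v * ((v * a * star v) * α g v) := by rw [key]
      _ = (star v * v) * (a * (star v * α g v)) := by simp only [mul_assoc]
      _ = a * (star v * α g v) := by rw [hv1, one_mul]
  have hnormal : ∀ g : G, IsStarNormal (star v * α g v) := by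
    intro g
    constructor
    show star (star v * α g v) * (star v * α g v) = (star v * α g v) * star (star v * α g v)
    have e1 : star (star v * α g v) = star (α g v) * v := by
      rw [star_mul, star_star]
    rw [e1]
    calc star (α g v) * v * (star v * α g v)
        = star (α g v) * (v * star v) * α g v := by simp only [mul_assoc]
      _ = (1 : A) := by rw [hv2, mul_one, huu]
      _ = star v * (α g v * star (α g v)) * v := by rw [huu' g, mul_one, hv1]
      _ = (star v * α g v) * (star (α g v) * v) := by simp only [mul_assoc]
  have hscalar : ∀ g : G, ∃ μ : ℂ, star v * α g v = μ • 1 := by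
    intro g
    haveI := hnormal g
    exact central_is_scalar hprime _ (hcent g)
  choose μ hμ using hscalar
  have hμv : ∀ g : G, α g v = μ g • v := by
    intro g
    calc α g v = (v * star v) * α g v := by rw [hv2, one_mul]
      _ = v * (star v * α g v) := by rw [mul_assoc]
      _ = v * (μ g • 1) := by rw [hμ]
      _ = μ g • v := by rw [mul_smul_comm, mul_one]
  have hinj : ∀ c d : ℂ, c • v = d • v → c = d := by
    intro c d h
    by_contra hne
    have h2 : (c - d) • v = 0 := by rw [sub_smul, h, sub_self]
    rcases smul_eq_zero.mp h2 with h3 | h3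
    · exact hne (sub_eq_zero.mp h3)
    · exact hvne h3
  have hone : ∀ g : G, (starRingEnd ℂ) (μ g) * μ g = 1 := by
    intro g
    have h1 : star (star v * α g v) * (star v * α g v) = 1 := by
      rw [star_mul, star_star]
      calc star (α g v) * v * (star v * α g v)
          = star (α g v) * (v * star v) * α g v := by simp only [mul_assoc]
        _ = 1 := by rw [hv2, mul_one, huu]
    rw [hμ] at h1
    rw [star_smul, star_one, smul_mul_assoc, mul_smul_comm, mul_one, smul_smul] at h1
    have h2 : ((starRingEnd ℂ) (μ g) * μ g) • (1 : A) = (1 : ℂ) • (1 : A) := by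
      rw [one_smul]; exact h1
    have h3 : ∀ c d : ℂ, c • (1 : A) = d • (1 : A) → c = d := by
      intro c d h
      by_contra hne
      have h4 : (c - d) • (1 : A) = 0 := by rw [sub_smul, h, sub_self]
      rcases smul_eq_zero.mp h4 with h5 | h5
      · exact hne (sub_eq_zero.mp h5)
      · exact one_ne_zero h5
    exact h3 _ _ h2
  have hnorm : ∀ g : G, ‖μ g‖ = 1 := by
    intro g
    have h1 := hone g
    have h2 : ‖(starRingEnd ℂ) (μ g) * μ g‖ = 1 := by rw [h1, norm_one]
    rw [norm_mul, RCLike.norm_conj] at h2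
    nlinarith [norm_nonneg (μ g)]
  have hne0 : ∀ g : G, μ g ≠ 0 := by
    intro g h
    have := hnorm g
    rw [h, norm_zero] at this
    norm_num at this
  have hmul : ∀ g h : G, μ (g * h) = μ g * μ h := by
    intro g h
    apply hinj
    rw [← hμv]
    calc α (g * h) v = α g (α h v) := (comp g h v).symm
      _ = α g (μ h • v) := by rw [hμv h]
      _ = μ h • α g v := map_smul (α g) _ _
      _ = μ h • (μ g • v) := by rw [hμv g]
      _ = (μ g * μ h) • v := by rw [smul_smul, mul_comm]
  have hone' : μ 1 = 1 := by
    apply hinj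
    rw [← hμv, map_one α, one_smul]
    rfl
  refine ⟨{ toFun := fun g => Units.mk0 (μ g) (hne0 g),
            map_one' := by ext; simp [hone'],
            map_mul' := fun g h => by ext; simp [hmul] }, ?_, ?_, ?_⟩
  · intro g; exact hnorm g
  · intro g; exact hμv g
  · intro hF hsum
    have hsum' : (∑ g : G, α g v) = (∑ g : G, μ g) • v := by
      rw [Finset.sum_smul]
      exact Finset.sum_congr rfl fun g _ => hμv g
    set S : ℂ := ∑ g : G, μ g with hS
    have hSne : S ≠ 0 := by
      intro h
      apply hsum
      rw [hsum', h, zero_smul]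
    have hall : ∀ g : G, μ g = 1 := by
      intro g₁
      have h1 : μ g₁ * S = S := by
        rw [hS, Finset.mul_sum]
        exact Fintype.sum_equiv (Equiv.mulLeft g₁) _ _
          (fun x => by simp [Equiv.coe_mulLeft, ← hmul])
      have h2 : μ g₁ * S = 1 * S := by rw [one_mul, h1]
      exact mul_right_cancel₀ hSne h2
    constructor
    · intro g; ext; simp [hall g]
    · intro g; rw [hμv g, hall g, one_smul]
end

section
/- Let A be a simple unital C*-algebra, G a finite abelian group, and α a faithful action of G on A by *-algebra automorphisms such that α_g is outer for every g ≠ e. Then for every pair of nonzero elements x, y ∈ A there exists a ∈ A^α with x a y ≠ 0; that is, x A^α y ≠ {0} for all nonzero x, y ∈ A. -/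
section Helpers

variable {A : Type*} [CStarAlgebra A]

/-- The additive submonoid of finite sums `∑ rᵢ * c * sᵢ`. -/
noncomputable def Msub (c : A) : AddSubmonoid A :=
  AddSubmonoid.closure (Set.range fun p : A × A => p.1 * c * p.2)

lemma self_mem_Msub (c : A) : c ∈ Msub c :=
  AddSubmonoid.subset_closure ⟨(1, 1), by simp⟩

lemma neg_mem_Msub {c z : A} (hz : z ∈ Msub c) : -z ∈ Msub c := by
  induction hz using AddSubmonoid.closure_induction with
  | mem t ht =>
    obtain ⟨⟨r, s⟩, rfl⟩ := ht
    exact AddSubmonoid.subset_closure ⟨(-r, s), by simp⟩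
  | zero => simpa using (Msub c).zero_mem
  | add a b _ _ ha hb => simpa [neg_add_rev] using (Msub c).add_mem hb ha

lemma mul_left_mem_Msub {c z : A} (r : A) (hz : z ∈ Msub c) : r * z ∈ Msub c := by
  induction hz using AddSubmonoid.closure_induction with
  | mem t ht =>
    obtain ⟨⟨a, b⟩, rfl⟩ := ht
    exact AddSubmonoid.subset_closure ⟨(r * a, b), by simp [mul_assoc]⟩
  | zero => simpa using (Msub c).zero_mem
  | add a b _ _ ha hb => simpa [mul_add] using (Msub c).add_mem ha hb

lemma mul_right_mem_Msub {c z : A} (r : A) (hz : z ∈ Msub c) : z * r ∈ Msub c := by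
  induction hz using AddSubmonoid.closure_induction with
  | mem t ht =>
    obtain ⟨⟨a, b⟩, rfl⟩ := ht
    exact AddSubmonoid.subset_closure ⟨(a, b * r), by simp [mul_assoc]⟩
  | zero => simpa using (Msub c).zero_mem
  | add a b _ _ ha hb => simpa [add_mul] using (Msub c).add_mem ha hb

lemma one_mem_Msub
    (hsimple : ∀ I : TwoSidedIdeal A, IsClosed (I : Set A) → I = ⊥ ∨ I = ⊤)
    {c : A} (hc : c ≠ 0) : (1 : A) ∈ Msub c := by
  classical
  set S : Set A := closure (Msub c : Set A) with hS
  let I : TwoSidedIdeal A :=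
    TwoSidedIdeal.mk' S
      (subset_closure (Msub c).zero_mem)
      (fun {a b} ha hb =>
        map_mem_closure₂ continuous_add ha hb fun u hu v hv => (Msub c).add_mem hu hv)
      (fun {a} ha => map_mem_closure continuous_neg ha fun u hu => neg_mem_Msub hu)
      (fun {a b} hb =>
        map_mem_closure (continuous_mul_left a) hb fun u hu => mul_left_mem_Msub a hu)
      (fun {a b} ha =>
        map_mem_closure (f := (· * b)) (continuous_mul_right b) ha
          fun u hu => mul_right_mem_Msub b hu)
  have hcoe : ∀ z : A, z ∈ I ↔ z ∈ S := fun z => TwoSidedIdeal.mem_mk' _ _ _ _ _ _ z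
  have hclosed : IsClosed (I : Set A) := by
    have : (I : Set A) = S := TwoSidedIdeal.coe_mk' _ _ _ _ _ _
    rw [this]; exact isClosed_closure
  rcases hsimple I hclosed with hbot | htop
  · exfalso
    have hcI : c ∈ I := (hcoe c).mpr (subset_closure (self_mem_Msub c))
    rw [hbot] at hcI
    exact hc (TwoSidedIdeal.mem_bot _ |>.mp hcI)
  · have h1 : (1 : A) ∈ S := (hcoe 1).mp (htop ▸ TwoSidedIdeal.mem_top _)
    obtain ⟨z, hzM, hz⟩ : ∃ z ∈ Msub c, dist (1 : A) z < 1 := by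
      rw [hS] at h1
      exact Metric.mem_closure_iff.mp h1 1 one_pos
    have hz' : ‖1 - z‖ < 1 := by rwa [← dist_eq_norm]
    let u : Aˣ := Units.oneSub (1 - z) hz'
    have huz : (u : A) = z := by simp [u]
    have : (1 : A) = ↑u⁻¹ * z := by rw [← huz, Units.inv_mul]
    rw [this]
    exact mul_left_mem_Msub _ hzM

lemma isUnit_of_central
    (hsimple : ∀ I : TwoSidedIdeal A, IsClosed (I : Set A) → I = ⊥ ∨ I = ⊤)
    {z : A} (hz : z ≠ 0) (hcentral : ∀ s : A, z * s = s * z) : IsUnit z := by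
  have h1 := one_mem_Msub hsimple hz
  have key : ∀ t ∈ Msub z, ∃ w : A, t = z * w := by
    intro t ht
    induction ht using AddSubmonoid.closure_induction with
    | mem t ht =>
      obtain ⟨⟨a, b⟩, rfl⟩ := ht
      exact ⟨a * b, by show a * z * b = z * (a * b); rw [← hcentral a, mul_assoc]⟩
    | zero => exact ⟨0, by simp⟩
    | add a b _ _ ha hb =>
      obtain ⟨w₁, rfl⟩ := ha; obtain ⟨w₂, rfl⟩ := hb
      exact ⟨w₁ + w₂, by rw [mul_add]⟩
  obtain ⟨w, hw⟩ := key 1 h1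
  exact ⟨⟨z, w, hw.symm, by rw [← hcentral w, ← hw]⟩, rfl⟩

lemma central_eq_smul_one [Nontrivial A]
    (hsimple : ∀ I : TwoSidedIdeal A, IsClosed (I : Set A) → I = ⊥ ∨ I = ⊤)
    {w : A} (hcentral : ∀ s : A, w * s = s * w) : ∃ μ : ℂ, w = μ • 1 := by
  obtain ⟨μ, hμ⟩ := spectrum.nonempty w
  refine ⟨μ, ?_⟩
  have hnu : ¬IsUnit (algebraMap ℂ A μ - w) := spectrum.mem_iff.mp hμ
  by_contra hne
  apply hnu
  refine isUnit_of_central hsimple ?_ ?_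
  · intro h0
    apply hne
    rw [sub_eq_zero] at h0
    rw [← h0, Algebra.algebraMap_eq_smul_one]
  · intro s
    simp only [sub_mul, mul_sub, hcentral s, Algebra.commutes]

lemma exists_unitary [Nontrivial A]
    (hsimple : ∀ I : TwoSidedIdeal A, IsClosed (I : Set A) → I = ⊥ ∨ I = ⊤)
    (β : A ≃ₐ[ℂ] A) (hstar : ∀ a : A, β (star a) = star (β a))
    {b : A} (hb0 : b ≠ 0) (hb : ∀ s : A, b * β s = s * b) :
    ∃ u : A, u ∈ unitary A ∧ ∀ a : A, β a = u * a * star u := by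
  have hb2 : ∀ s : A, β s * star b = star b * s := by
    intro s
    have h := congrArg star (hb (star s))
    simp only [star_mul, hstar, star_star] at h
    exact h
  have hbsymm : ∀ t : A, b * t = β.symm t * b := by
    intro t
    have := hb (β.symm t)
    rwa [AlgEquiv.apply_symm_apply] at this
  -- w = b* b is central
  have hwc : ∀ s : A, (star b * b) * s = s * (star b * b) := by
    intro s
    calc (star b * b) * s = star b * (β.symm s * b) := by rw [mul_assoc, hbsymm s]
    _ = (β (β.symm s) * star b) * b := by rw [← mul_assoc, hb2]
    _ = s * (star b * b) := by rw [AlgEquiv.apply_symm_apply, mul_assoc]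
  have hw'c : ∀ s : A, (b * star b) * s = s * (b * star b) := by
    intro s
    calc (b * star b) * s = b * (β s * star b) := by rw [mul_assoc, hb2]
    _ = (s * b) * star b := by rw [← mul_assoc, hb]
    _ = s * (b * star b) := by rw [mul_assoc]
  have hwne : star b * b ≠ 0 := fun h => hb0 ((CStarRing.star_mul_self_eq_zero_iff b).mp h)
  obtain ⟨μ, hμ⟩ := central_eq_smul_one hsimple hwc
  obtain ⟨ν, hν⟩ := central_eq_smul_one hsimple hw'c
  -- μ = ν
  have hμν : μ = ν := by
    have h1 : b * (star b * b) = (b * star b) * b := by rw [mul_assoc]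
    rw [hμ, hν] at h1
    have h2 : μ • b = ν • b := by
      simpa [mul_smul_comm, smul_mul_assoc] using h1
    have h3 : (μ - ν) • b = 0 := by rw [sub_smul, h2, sub_self]
    rcases smul_eq_zero.mp h3 with h | h
    · exact sub_eq_zero.mp h
    · exact absurd h hb0
  -- b is normal
  have hnormal : IsStarNormal b := ⟨by rw [Commute, SemiconjBy, hμ, hν, hμν]⟩
  -- μ is real and nonnegative, via the spectral mapping theorem
  have hμ_mem : μ ∈ spectrum ℂ (star b * b) := by
    rw [spectrum.mem_iff]
    have : algebraMap ℂ A μ - star b * b = 0 := by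
      rw [hμ, Algebra.algebraMap_eq_smul_one, sub_self]
    rw [this]
    exact not_isUnit_zero
  have hcfc : star b * b = cfc (fun z : ℂ => star z * z) b := by
    have h1 : cfc (fun z : ℂ => star z) b = star b := by
      rw [cfc_star (fun z : ℂ => z) b, cfc_id' ℂ b]
    rw [cfc_mul (fun z : ℂ => star z) (fun z : ℂ => z) b, h1, cfc_id' ℂ b]
  obtain ⟨lam, -, hlam⟩ : ∃ lam ∈ spectrum ℂ b, star lam * lam = μ := by
    rw [hcfc, cfc_map_spectrum (fun z : ℂ => star z * z) b] at hμ_mem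
    exact hμ_mem
  obtain ⟨r, hr, hrnonneg⟩ : ∃ r : ℝ, (r : ℂ) = μ ∧ 0 ≤ r := by
    refine ⟨Complex.normSq lam, ?_, Complex.normSq_nonneg lam⟩
    rw [← hlam, Complex.star_def, mul_comm, Complex.mul_conj]
  have hrne : r ≠ 0 := by
    rintro rfl
    rw [hμ, ← hr] at hwne
    simp at hwne
  have hrpos : 0 < r := lt_of_le_of_ne hrnonneg (Ne.symm hrne)
  -- the unitary
  set t : ℝ := (Real.sqrt r)⁻¹ with ht
  have htt : (t : ℂ) * (t : ℂ) * (r : ℂ) = 1 := by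
    rw [← Complex.ofReal_mul, ← Complex.ofReal_mul, ← Complex.ofReal_one]
    congr 1
    rw [ht, ← mul_inv, Real.mul_self_sqrt (le_of_lt hrpos)]
    exact inv_mul_cancel₀ hrne
  have hstart : star ((t : ℂ) • star b) = (t : ℂ) • b := by
    rw [star_smul, star_star, Complex.star_def, Complex.conj_ofReal]
  refine ⟨(t : ℂ) • star b, ?_, ?_⟩
  · rw [Unitary.mem_iff]
    constructor
    · rw [hstart, smul_mul_smul_comm, hν, ← hμν, ← hr, smul_smul, htt, one_smul]
    · rw [hstart, smul_mul_smul_comm, hμ, ← hr, smul_smul, htt, one_smul]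
  · intro a
    rw [hstart]
    have key : star b * a * b = (r : ℂ) • β a := by
      have h' : a * b = b * β a := (hb a).symm
      rw [mul_assoc, h', ← mul_assoc, hμ, ← hr, smul_mul_assoc, one_mul]
    calc β a = ((t:ℂ) * (t:ℂ) * (r:ℂ)) • β a := by rw [htt, one_smul]
    _ = ((t:ℂ) • star b) * a * ((t:ℂ) • b) := by
        rw [smul_mul_assoc, smul_mul_assoc, mul_smul_comm, key, smul_smul, smul_smul, mul_assoc]

end Helpers


/-- STATEMENT 16 (a) ⇒ e) in the simple unital case): Let `α` be a faithful action of a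
finite abelian group `G` on a simple unital C*-algebra `A` such that `α_g` is outer for
every `g ≠ e`.  Then `x A^α y ≠ {0}` for all nonzero `x, y ∈ A`. -/
theorem fixed_point_algebra_separates
    (A : Type*) [CStarAlgebra A]
    (hsimple : ∀ I : TwoSidedIdeal A, IsClosed (I : Set A) → I = ⊥ ∨ I = ⊤)
    (G : Type*) [CommGroup G] [Fintype G]
    (α : G →* (A ≃ₐ[ℂ] A))
    (hαstar : ∀ (g : G) (a : A), α g (star a) = star (α g a))
    (hfaithful : ∀ g : G, (∀ a : A, α g a = a) → g = 1)
    (houter : ∀ g : G, g ≠ 1 →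
      ¬ ∃ u : A, u ∈ unitary A ∧ ∀ a : A, α g a = u * a * star u)
    (x y : A) (hx : x ≠ 0) (hy : y ≠ 0) :
    ∃ a : A, (∀ g : G, α g a = a) ∧ x * a * y ≠ 0 := by
  classical
  by_contra hcon
  push_neg at hcon
  haveI : Nontrivial A := nontrivial_of_ne x 0 hx
  set P : (G → A) → Prop := fun f => ∀ m : A, ∑ g : G, f g * α g m * y = 0 with hP
  have halg : ∀ (g h : G) (m : A), α g (α h m) = α (g * h) m := by
    intro g h m
    rw [map_mul]
    rfl
  have hPconst : P fun _ => x := by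
    intro m
    have hfix : ∀ h : G, α h (∑ g : G, α g m) = ∑ g : G, α g m := by
      intro h
      rw [map_sum]
      exact Fintype.sum_equiv (Equiv.mulLeft h) _ _ fun g => halg h g m
    calc ∑ g : G, x * α g m * y = x * (∑ g : G, α g m) * y := by
          rw [Finset.mul_sum, Finset.sum_mul]
    _ = 0 := hcon _ hfix
  set supp : (G → A) → Finset G := fun f => Finset.univ.filter (fun g => f g ≠ 0) with hsuppdef
  set N : Set ℕ := {n | ∃ f : G → A, P f ∧ f ≠ 0 ∧ (supp f).card = n} with hN
  have hNne : N.Nonempty := by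
    refine ⟨(supp fun _ => x).card, (fun _ => x), hPconst, ?_, rfl⟩
    intro h0
    exact hx (congrFun h0 1)
  set n₀ : ℕ := sInf N with hn₀
  have hn₀mem : n₀ ∈ N := Nat.sInf_mem hNne
  obtain ⟨f₀, hPf₀, hf₀ne, hcard₀⟩ := hn₀mem
  have hmin : ∀ f : G → A, P f → f ≠ 0 → n₀ ≤ (supp f).card := fun f h1 h2 =>
    Nat.sInf_le ⟨f, h1, h2, rfl⟩
  obtain ⟨g₀, hg₀⟩ : ∃ g, f₀ g ≠ 0 := Function.ne_iff.mp hf₀ne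
  set f₀' : G → A := fun g => f₀ (g * g₀) with hf₀'def
  have hPf₀' : P f₀' := by
    intro m
    have h0 := hPf₀ (α g₀⁻¹ m)
    rw [← h0]
    refine Fintype.sum_equiv (Equiv.mulRight g₀) _ _ fun g => ?_
    have h2 : α (g * g₀) (α g₀⁻¹ m) = α g m := by
      rw [halg]
      congr 1
      group
    simp only [Equiv.coe_mulRight, h2]
    rfl
  have hf₀'1 : f₀' 1 ≠ 0 := by
    simpa [hf₀'def] using hg₀
  have hcard' : (supp f₀').card ≤ n₀ := by
    rw [← hcard₀]
    apply Finset.card_le_card_of_injOn (fun g => g * g₀)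
    · intro g hg
      simp only [hsuppdef, Finset.mem_filter, Finset.mem_univ, true_and, hf₀'def, Finset.mem_coe] at hg ⊢
      exact hg
    · intro a _ b _ hab
      exact mul_right_cancel hab
  -- normalize: find f₁ with f₁ 1 = 1
  have key : ∀ t ∈ Msub (f₀' 1),
      ∃ f : G → A, P f ∧ f 1 = t ∧ ∀ g, f g ≠ 0 → f₀' g ≠ 0 := by
    intro t ht
    induction ht using AddSubmonoid.closure_induction with
    | mem t ht =>
      obtain ⟨⟨r, s⟩, rfl⟩ := ht
      refine ⟨fun g => r * f₀' g * α g s, ?_, ?_, ?_⟩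
      · intro m
        have h0 := hPf₀' (s * m)
        calc ∑ g : G, (r * f₀' g * α g s) * α g m * y
            = ∑ g : G, r * (f₀' g * α g (s * m) * y) := by
              refine Finset.sum_congr rfl fun g _ => ?_
              simp only [map_mul, mul_assoc]
        _ = 0 := by rw [← Finset.mul_sum, h0, mul_zero]
      · show r * f₀' 1 * α 1 s = r * f₀' 1 * s
        rw [map_one, AlgEquiv.one_apply]
      · intro g hg
        by_contra h0
        apply hg
        show r * f₀' g * (α g) s = 0
        rw [h0, mul_zero, zero_mul]
    | zero =>
      exact ⟨0, fun m => by simp, rfl, fun g hg => by simp at hg⟩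
    | add a b ha hb iha ihb =>
      obtain ⟨f, hf1, hf2, hf3⟩ := iha
      obtain ⟨f', hf1', hf2', hf3'⟩ := ihb
      refine ⟨f + f', ?_, by simp [hf2, hf2'], ?_⟩
      · intro m
        simp only [Pi.add_apply, add_mul]
        rw [Finset.sum_add_distrib, hf1 m, hf1' m, add_zero]
      · intro g hg
        by_contra h0
        have hfg : f g = 0 := by
          by_contra hc
          exact (hf3 g hc) h0
        have hfg' : f' g = 0 := by
          by_contra hc
          exact (hf3' g hc) h0
        apply hg
        simp [hfg, hfg']
  obtain ⟨f₁, hPf₁, hf₁1, hsupp₁⟩ := key 1 (one_mem_Msub hsimple hf₀'1)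
  -- the commutation relations
  have hcomm : ∀ (s : A) (g : G), f₁ g * α g s = s * f₁ g := by
    intro s g
    set f₂ : G → A := fun h => f₁ h * α h s - s * f₁ h with hf₂def
    have hPf₂ : P f₂ := by
      intro m
      calc ∑ h : G, f₂ h * α h m * y
          = ∑ h : G, (f₁ h * α h (s * m) * y - s * (f₁ h * α h m * y)) := by
            refine Finset.sum_congr rfl fun h _ => ?_
            simp only [hf₂def, sub_mul, map_mul, mul_assoc]
      _ = (∑ h : G, f₁ h * α h (s * m) * y) - s * ∑ h : G, f₁ h * α h m * y := by
            rw [Finset.sum_sub_distrib, Finset.mul_sum]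
      _ = 0 := by rw [hPf₁ (s * m), hPf₁ m, mul_zero, sub_zero]
    have hf₂1 : f₂ 1 = 0 := by
      simp only [hf₂def]
      rw [hf₁1, map_one, AlgEquiv.one_apply, one_mul, mul_one, sub_self]
    have hf₂0 : f₂ = 0 := by
      by_contra hne
      have hle := hmin f₂ hPf₂ hne
      have h1mem : (1 : G) ∈ supp f₀' := by
        simp [hsuppdef, hf₀'1]
      have hsub : supp f₂ ⊆ (supp f₀').erase 1 := by
        intro h hh
        simp only [hsuppdef, Finset.mem_filter, Finset.mem_univ, true_and] at hh
        rw [Finset.mem_erase]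
        constructor
        · rintro rfl
          exact hh hf₂1
        · simp only [hsuppdef, Finset.mem_filter, Finset.mem_univ, true_and]
          apply hsupp₁
          intro hc
          apply hh
          simp [hf₂def, hc]
      have hlt : ((supp f₀').erase 1).card < n₀ :=
        lt_of_lt_of_le (Finset.card_erase_lt_of_mem h1mem) hcard'
      exact absurd (le_trans hle (Finset.card_le_card hsub)) (not_le.mpr hlt)
    have h := congrFun hf₂0 g
    simp only [hf₂def, Pi.zero_apply] at h
    exact sub_eq_zero.mp h
  -- off the identity f₁ vanishes
  have hvanish : ∀ g : G, g ≠ 1 → f₁ g = 0 := by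
    intro g hg
    by_contra hbne
    obtain ⟨u, hu, hrep⟩ :=
      exists_unitary hsimple (α g) (hαstar g) hbne (fun s => hcomm s g)
    exact houter g hg ⟨u, hu, hrep⟩
  -- conclusion: y = 0
  have hsum := hPf₁ 1
  have hval : (∑ g : G, f₁ g * α g 1 * y) = y := by
    rw [Finset.sum_eq_single 1]
    · rw [hf₁1, map_one, one_mul, one_mul]
    · intro g _ hg
      rw [hvanish g hg, zero_mul, zero_mul]
    · intro h
      exact absurd (Finset.mem_univ 1) h
  exact hy (hval.symm.trans hsum)
end
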